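/- Let M ∈ ℝ^{n×m} with SVD partitioned as M = U₁Σ₁V₁ᵀ + U₂Σ₂V₂ᵀ where Σ₁ contains the top r singular values. Let Ψ ∈ ℝ^{m×d} and set Ψ₁ = V₁ᵀΨ, Ψ₂ = V₂ᵀΨ, Y = MΨ. If Ψ₁ has full row rank r, then ‖M − P_Y M‖₂² ≤ ‖Σ₂‖₂² + ‖Σ₂Ψ₂Ψ₁†‖₂², where P_Y is the orthogonal projection onto the column space of Y and Ψ₁† is the Moore–Penrose pseudoinverse. -/
import Mathlib


open Matrix

/-- Spectral norm of a real matrix. -/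
noncomputable def spec {n m : ℕ} (A : Matrix (Fin n) (Fin m) ℝ) : ℝ :=
  ‖LinearMap.toContinuousLinearMap (Matrix.toEuclideanLin A)‖

section SpecLemmas
open scoped Matrix.Norms.L2Operator

private lemma spec_eq_norm {n m : ℕ} (A : Matrix (Fin n) (Fin m) ℝ) : spec A = ‖A‖ := rfl

private lemma spec_nonneg {n m : ℕ} (A : Matrix (Fin n) (Fin m) ℝ) : 0 ≤ spec A :=
  norm_nonneg _

private lemma spec_mul_le {n m l : ℕ} (A : Matrix (Fin n) (Fin m) ℝ)
    (B : Matrix (Fin m) (Fin l) ℝ) : spec (A * B) ≤ spec A * spec B := by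
  simp only [spec_eq_norm]; exact Matrix.l2_opNorm_mul A B

private lemma spec_add_le {n m : ℕ} (A B : Matrix (Fin n) (Fin m) ℝ) :
    spec (A + B) ≤ spec A + spec B := by
  simp only [spec_eq_norm]; exact norm_add_le A B

private lemma spec_tr {n m : ℕ} (A : Matrix (Fin n) (Fin m) ℝ) : spec Aᵀ = spec A := by
  simp only [spec_eq_norm]
  rw [← conjTranspose_eq_transpose_of_trivial, Matrix.l2_opNorm_conjTranspose]

private lemma spec_tr_mul_self {n m : ℕ} (A : Matrix (Fin n) (Fin m) ℝ) :
    spec (Aᵀ * A) = spec A * spec A := by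
  simp only [spec_eq_norm]
  rw [← conjTranspose_eq_transpose_of_trivial, Matrix.l2_opNorm_conjTranspose_mul_self]

end SpecLemmas


set_option maxHeartbeats 1000000 in
/-- Halko–Martinsson–Tropp, Thm 9.1: deterministic bound for randomized
range finding. `k` plays the role of `m − r`; `P` is the orthogonal projection onto the
column space of `Y = MΨ`; `Ψ₁dag` is the Moore–Penrose pseudoinverse of `Ψ₁ = V₁ᵀΨ`,
characterized by the four Penrose equations; full row rank of `Ψ₁` is `Ψ₁ Ψ₁† = I`. -/
theorem stmt_7 (n m r k d : ℕ)
    (U₁ : Matrix (Fin n) (Fin r) ℝ) (U₂ : Matrix (Fin n) (Fin k) ℝ)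
    (V₁ : Matrix (Fin m) (Fin r) ℝ) (V₂ : Matrix (Fin m) (Fin k) ℝ)
    (σ₁ : Fin r → ℝ) (σ₂ : Fin k → ℝ)
    (hU1 : U₁ᵀ * U₁ = 1) (hU2 : U₂ᵀ * U₂ = 1) (hU12 : U₁ᵀ * U₂ = 0)
    (hV1 : V₁ᵀ * V₁ = 1) (hV2 : V₂ᵀ * V₂ = 1) (hV12 : V₁ᵀ * V₂ = 0)
    (M : Matrix (Fin n) (Fin m) ℝ)
    (hM : M = U₁ * Matrix.diagonal σ₁ * V₁ᵀ + U₂ * Matrix.diagonal σ₂ * V₂ᵀ)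
    (Ψ : Matrix (Fin m) (Fin d) ℝ)
    (Ψ₁ : Matrix (Fin r) (Fin d) ℝ) (hΨ₁ : Ψ₁ = V₁ᵀ * Ψ)
    (Ψ₂ : Matrix (Fin k) (Fin d) ℝ) (hΨ₂ : Ψ₂ = V₂ᵀ * Ψ)
    (Ψ₁dag : Matrix (Fin d) (Fin r) ℝ)
    (hp1 : Ψ₁ * Ψ₁dag * Ψ₁ = Ψ₁) (hp2 : Ψ₁dag * Ψ₁ * Ψ₁dag = Ψ₁dag)
    (hp3 : (Ψ₁ * Ψ₁dag)ᵀ = Ψ₁ * Ψ₁dag) (hp4 : (Ψ₁dag * Ψ₁)ᵀ = Ψ₁dag * Ψ₁)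
    (hfullrank : Ψ₁ * Ψ₁dag = 1)
    (P : Matrix (Fin n) (Fin n) ℝ)
    (hPsymm : Pᵀ = P) (hPidem : P * P = P)
    (hPfix : P * (M * Ψ) = M * Ψ)
    (hPrange : ∃ W : Matrix (Fin d) (Fin n) ℝ, P = M * Ψ * W) :
    spec (M - P * M) ^ 2 ≤
      spec (Matrix.diagonal σ₂) ^ 2 + spec (Matrix.diagonal σ₂ * Ψ₂ * Ψ₁dag) ^ 2 := by
  set D₂ := Matrix.diagonal σ₂ with hD₂
  set F := D₂ * Ψ₂ * Ψ₁dag with hF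
  set C := Ψ₁dag * V₁ᵀ with hC
  set G := D₂ * V₂ᵀ - F * V₁ᵀ with hG
  -- M*Ψ in SVD form
  have hMΨ : M * Ψ = U₁ * (Matrix.diagonal σ₁ * Ψ₁) + U₂ * (D₂ * Ψ₂) := by
    rw [hM, hΨ₁, hΨ₂]
    simp only [Matrix.add_mul, Matrix.mul_assoc]
  have hinv : Ψ₁ * (Ψ₁dag * V₁ᵀ) = V₁ᵀ := by
    rw [← Matrix.mul_assoc, hfullrank, Matrix.one_mul]
  have hMΨC : M * Ψ * C = U₁ * (Matrix.diagonal σ₁ * V₁ᵀ) + U₂ * (F * V₁ᵀ) := by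
    rw [hMΨ, hC, hF]
    simp only [Matrix.add_mul, Matrix.mul_assoc, hinv]
  have h2 : M - M * Ψ * C = U₂ * G := by
    rw [hMΨC, hM, hG]
    simp only [Matrix.mul_sub, Matrix.mul_assoc]
    abel
  have hPfix' : P * (M * Ψ * C) = M * Ψ * C := by
    rw [← Matrix.mul_assoc, hPfix]
  have h1 : M - P * M = (1 - P) * (U₂ * G) := by
    rw [← h2, Matrix.sub_mul, Matrix.one_mul, Matrix.mul_sub, hPfix']
    abel
  -- norm of 1 - P is ≤ 1
  have hQt : (1 - P)ᵀ = 1 - P := by rw [Matrix.transpose_sub, Matrix.transpose_one, hPsymm]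
  have hQidem : (1 - P) * (1 - P) = 1 - P := by
    simp only [Matrix.sub_mul, Matrix.mul_sub, Matrix.one_mul, Matrix.mul_one, hPidem]
    abel
  have hQ : spec ((1 : Matrix (Fin n) (Fin n) ℝ) - P) ≤ 1 := by
    have h := spec_tr_mul_self (1 - P)
    rw [hQt, hQidem] at h
    nlinarith [spec_nonneg ((1 : Matrix (Fin n) (Fin n) ℝ) - P)]
  -- spec (U₂ * G) = spec G
  have hUG : spec (U₂ * G) = spec G := by
    have h := spec_tr_mul_self (U₂ * G)
    rw [Matrix.transpose_mul, Matrix.mul_assoc, ← Matrix.mul_assoc U₂ᵀ, hU2,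
      Matrix.one_mul, spec_tr_mul_self] at h
    nlinarith [spec_nonneg (U₂ * G), spec_nonneg G]
  -- G * Gᵀ = D₂ * D₂ᵀ + F * Fᵀ
  have hV21 : V₂ᵀ * V₁ = 0 := by
    have := congrArg Matrix.transpose hV12
    simpa [Matrix.transpose_mul] using this
  have hGGt : G * Gᵀ = D₂ * D₂ᵀ + F * Fᵀ := by
    rw [hG]
    simp only [Matrix.transpose_sub, Matrix.transpose_mul, Matrix.sub_mul, Matrix.mul_sub,
      Matrix.transpose_transpose]
    rw [Matrix.mul_assoc D₂ V₂ᵀ, ← Matrix.mul_assoc V₂ᵀ V₂, hV2, Matrix.one_mul,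
      Matrix.mul_assoc D₂ V₂ᵀ (V₁ * Fᵀ), ← Matrix.mul_assoc V₂ᵀ V₁, hV21,
      Matrix.mul_assoc F V₁ᵀ (V₂ * D₂ᵀ), ← Matrix.mul_assoc V₁ᵀ V₂, hV12,
      Matrix.mul_assoc F V₁ᵀ (V₁ * Fᵀ), ← Matrix.mul_assoc V₁ᵀ V₁, hV1, Matrix.one_mul]
    simp
  have hGsq : spec G ^ 2 ≤ spec D₂ ^ 2 + spec F ^ 2 := by
    have h1' : spec G * spec G = spec (G * Gᵀ) := by
      rw [← spec_tr G, ← spec_tr_mul_self Gᵀ, Matrix.transpose_transpose]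
    have h2' : spec (G * Gᵀ) ≤ spec (D₂ * D₂ᵀ) + spec (F * Fᵀ) := hGGt ▸ spec_add_le _ _
    have h3' : spec (D₂ * D₂ᵀ) = spec D₂ * spec D₂ := by
      have h := spec_tr_mul_self D₂ᵀ
      rwa [Matrix.transpose_transpose, spec_tr] at h
    have h4' : spec (F * Fᵀ) = spec F * spec F := by
      have h := spec_tr_mul_self Fᵀ
      rwa [Matrix.transpose_transpose, spec_tr] at h
    nlinarith
  have hmain : spec (M - P * M) ≤ spec G := by
    rw [h1]
    calc spec ((1 - P) * (U₂ * G)) ≤ spec ((1 : Matrix (Fin n) (Fin n) ℝ) - P) * spec (U₂ * G) :=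
          spec_mul_le _ _
      _ ≤ 1 * spec (U₂ * G) := mul_le_mul_of_nonneg_right hQ (spec_nonneg _)
      _ = spec G := by rw [one_mul, hUG]
  calc spec (M - P * M) ^ 2 ≤ spec G ^ 2 := by
        exact pow_le_pow_left₀ (spec_nonneg _) hmain 2
    _ ≤ spec D₂ ^ 2 + spec F ^ 2 := hGsq
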